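/- Let k ∈ ℕ, let f : ℝ → ℂ be a 2π-periodic C^k function, let z₁, …, z_M ∈ ℝ be finitely many points, and let ε > 0. Then there exists a finite Fourier series p such that p^{(i)}(z_j) = f^{(i)}(z_j) for all 0 ≤ i ≤ k and all j = 1, …, M, and |f − p|_k < ε. -/

import Mathlib

open Complex Finset

noncomputable section

def Complex.abs : AbsoluteValue ℂ ℝ where
  toFun := fun z => ‖z‖
  map_mul' := norm_mul
  nonneg' := norm_nonneg
  eq_zero' := fun _ => norm_eq_zero
  add_le' := norm_add_le

lemma Complex.norm_eq_abs (z : ℂ) : ‖z‖ = Complex.abs z := rfl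

lemma Complex.abs_I : Complex.abs Complex.I = 1 := Complex.norm_I

lemma Complex.abs_intCast (n : ℤ) : Complex.abs (n : ℂ) = |(n : ℝ)| := Complex.norm_intCast n

lemma Complex.abs_ofReal (r : ℝ) : Complex.abs (r : ℂ) = |r| :=
  (Complex.norm_real r).trans (Real.norm_eq_abs r)

/-- basic exponential -/
def E (m : ℤ) : ℝ → ℂ := fun t => Complex.exp (m * t * Complex.I)

lemma le_coe_top {n : ℕ} : (n : WithTop ℕ∞) ≤ ((⊤ : ℕ∞) : WithTop ℕ∞) := by
  exact_mod_cast le_top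

lemma one_le_coe_top : (1 : WithTop ℕ∞) ≤ ((⊤ : ℕ∞) : WithTop ℕ∞) := by
  exact_mod_cast le_top

lemma E_apply (m : ℤ) (t : ℝ) : E m t = Complex.exp (m * t * Complex.I) := rfl

lemma E_contDiff (m : ℤ) : ContDiff ℝ (⊤ : ℕ∞) (E m) := by
  have h0 : ContDiff ℝ (⊤ : ℕ∞) (fun t : ℝ => (t : ℂ)) := Complex.ofRealCLM.contDiff
  exact Complex.contDiff_exp.comp ((contDiff_const.mul h0).mul contDiff_const)

lemma E_hasDerivAt (m : ℤ) (t : ℝ) : HasDerivAt (E m) ((m * Complex.I) * E m t) t := by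
  have h1 : HasDerivAt (fun t : ℝ => ((m : ℂ) * t * Complex.I)) (m * Complex.I) t := by
    simpa using ((Complex.ofRealCLM.hasDerivAt (x := t)).const_mul (m : ℂ)).mul_const Complex.I
  have h2 := h1.cexp
  have h3 : (fun x : ℝ => Complex.exp ((m:ℂ) * x * Complex.I)) = E m := rfl
  rw [h3] at h2
  rw [show Complex.exp ((m:ℂ)*t*Complex.I)*((m:ℂ)*Complex.I) = (m:ℂ)*Complex.I*E m t from by rw [E_apply]; ring] at h2
  exact h2

lemma E_deriv (m : ℤ) : deriv (E m) = fun t => (m * Complex.I) * E m t := by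
  funext t; exact (E_hasDerivAt m t).deriv

lemma E_zero : E 0 = fun _ => 1 := by funext t; simp [E]

lemma E_norm (m : ℤ) (t : ℝ) : Complex.abs (E m t) = 1 := by
  simp [E, ← Complex.norm_eq_abs, Complex.norm_exp]

lemma E_periodic (m : ℤ) : Function.Periodic (E m) (2 * Real.pi) := by
  intro x
  simp only [E]
  rw [show ((m : ℂ) * ((x : ℝ) + 2*Real.pi : ℝ) * Complex.I) = m * x * Complex.I + m * (2 * Real.pi * Complex.I) by push_cast; ring,
    Complex.exp_add, Complex.exp_int_mul_two_pi_mul_I, mul_one]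

/-- trig polynomial from finite coefficients -/
def tpSum (F : Finset ℤ) (c : ℤ → ℂ) : ℝ → ℂ := fun t => ∑ m ∈ F, c m * E m t

lemma tpSum_contDiff (F : Finset ℤ) (c : ℤ → ℂ) : ContDiff ℝ (⊤ : ℕ∞) (tpSum F c) := by
  apply ContDiff.sum (fun m _ => contDiff_const.mul (E_contDiff m))

lemma tpSum_hasDerivAt (F : Finset ℤ) (c : ℤ → ℂ) (t : ℝ) :
    HasDerivAt (tpSum F c) (tpSum F (fun m => (m * Complex.I) * c m) t) t := by
  have : HasDerivAt (tpSum F c) (∑ m ∈ F, c m * ((m * Complex.I) * E m t)) t :=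
    HasDerivAt.fun_sum (fun m _ => (E_hasDerivAt m t).const_mul (c m))
  simpa [tpSum, mul_comm, mul_assoc, mul_left_comm] using this

lemma tpSum_deriv (F : Finset ℤ) (c : ℤ → ℂ) :
    deriv (tpSum F c) = tpSum F (fun m => (m * Complex.I) * c m) := by
  funext t; exact (tpSum_hasDerivAt F c t).deriv

lemma tpSum_iteratedDeriv (F : Finset ℤ) (c : ℤ → ℂ) (i : ℕ) :
    iteratedDeriv i (tpSum F c) = tpSum F (fun m => (m * Complex.I) ^ i * c m) := by
  induction i with
  | zero => simp [tpSum]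
  | succ n ih =>
      rw [iteratedDeriv_succ, ih, tpSum_deriv]
      congr 1; funext m; ring

lemma tpSum_norm_le (F : Finset ℤ) (c : ℤ → ℂ) (t : ℝ) :
    Complex.abs (tpSum F c t) ≤ ∑ m ∈ F, Complex.abs (c m) := by
  have := norm_sum_le F (fun m => c m * E m t)
  simp only [Complex.norm_eq_abs] at this
  refine le_trans this (Finset.sum_le_sum (fun m _ => ?_))
  rw [map_mul, E_norm, mul_one]

lemma tpSum_periodic (F : Finset ℤ) (c : ℤ → ℂ) :
    Function.Periodic (tpSum F c) (2 * Real.pi) := by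
  intro x; unfold tpSum
  exact Finset.sum_congr rfl (fun m _ => by rw [E_periodic m x])

def IsFiniteFourierSeries (p : ℝ → ℂ) : Prop :=
  ∃ (N : ℕ) (c : ℤ → ℂ), ∀ t : ℝ,
    p t = ∑ m ∈ Finset.Icc (-(N : ℤ)) (N : ℤ), c m * Complex.exp (m * t * Complex.I)

lemma ffs_iff (p : ℝ → ℂ) :
    IsFiniteFourierSeries p ↔ ∃ (F : Finset ℤ) (c : ℤ → ℂ), p = tpSum F c := by
  constructor
  · rintro ⟨N, c, h⟩
    exact ⟨Finset.Icc (-(N:ℤ)) N, c, funext h⟩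
  · rintro ⟨F, c, rfl⟩
    set N := F.sup (fun m => m.natAbs) with hN
    refine ⟨N, fun m => if m ∈ F then c m else 0, fun t => ?_⟩
    have hsub : F ⊆ Finset.Icc (-(N:ℤ)) N := by
      intro m hm
      have h1 : m.natAbs ≤ N := Finset.le_sup (f := fun m => m.natAbs) hm
      simp only [Finset.mem_Icc]
      omega
    rw [show (tpSum F c t) = ∑ m ∈ F, (if m ∈ F then c m else 0) * E m t from
      Finset.sum_congr rfl (fun m hm => by rw [if_pos hm])]
    rw [Finset.sum_subset hsub (fun m _ hm => by rw [if_neg hm, zero_mul])]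
    exact Finset.sum_congr rfl (fun m _ => by rw [E_apply])

lemma ffs_tpSum (F : Finset ℤ) (c : ℤ → ℂ) : IsFiniteFourierSeries (tpSum F c) :=
  (ffs_iff _).mpr ⟨F, c, rfl⟩

lemma tpSum_extend {F G : Finset ℤ} (c : ℤ → ℂ) (h : F ⊆ G) :
    tpSum F c = tpSum G (fun m => if m ∈ F then c m else 0) := by
  funext t
  rw [show (tpSum F c t) = ∑ m ∈ F, (if m ∈ F then c m else 0) * E m t from
    Finset.sum_congr rfl (fun m hm => by rw [if_pos hm])]
  exact Finset.sum_subset h (fun m _ hm => by rw [if_neg hm, zero_mul])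

lemma ffs_add {p q : ℝ → ℂ} (hp : IsFiniteFourierSeries p) (hq : IsFiniteFourierSeries q) :
    IsFiniteFourierSeries (p + q) := by
  rw [ffs_iff] at *
  obtain ⟨F, c, rfl⟩ := hp
  obtain ⟨G, d, rfl⟩ := hq
  refine ⟨F ∪ G, (fun m => if m ∈ F then c m else 0) + (fun m => if m ∈ G then d m else 0), ?_⟩
  rw [tpSum_extend c (Finset.subset_union_left (s₂ := G)), tpSum_extend d (Finset.subset_union_right (s₁ := F))]
  funext t
  simp only [Pi.add_apply]
  unfold tpSum
  rw [← Finset.sum_add_distrib]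
  exact Finset.sum_congr rfl (fun m _ => by simp only [Pi.add_apply]; ring)

lemma ffs_const_mul {p : ℝ → ℂ} (a : ℂ) (hp : IsFiniteFourierSeries p) :
    IsFiniteFourierSeries (fun t => a * p t) := by
  rw [ffs_iff] at *
  obtain ⟨F, c, rfl⟩ := hp
  refine ⟨F, fun m => a * c m, ?_⟩
  funext t
  simp only [tpSum, Finset.mul_sum]
  exact Finset.sum_congr rfl (fun m _ => by ring)

lemma ffs_const (a : ℂ) : IsFiniteFourierSeries (fun _ => a) := by
  rw [ffs_iff]
  refine ⟨{0}, fun _ => a, ?_⟩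
  funext t
  simp [tpSum, E_zero]

lemma ffs_zero : IsFiniteFourierSeries (fun _ => 0) := ffs_const 0

lemma ffs_fsum {ι : Type*} (s : Finset ι) (g : ι → ℝ → ℂ)
    (h : ∀ i ∈ s, IsFiniteFourierSeries (g i)) :
    IsFiniteFourierSeries (fun t => ∑ i ∈ s, g i t) := by
  classical
  induction s using Finset.induction_on with
  | empty => simpa using ffs_zero
  | insert a s hnot ih =>
      have h1 : IsFiniteFourierSeries (g a + fun t => ∑ i ∈ s, g i t) :=
        ffs_add (h a (Finset.mem_insert_self a s))
          (ih (fun i hi => h i (Finset.mem_insert_of_mem hi)))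
      have : (fun t => ∑ i ∈ insert a s, g i t) = (g a + fun t => ∑ i ∈ s, g i t) := by
        funext t; simp [Finset.sum_insert hnot]
      rwa [this]

lemma E_mul_E (a m : ℤ) (t : ℝ) : E a t * E m t = E (a + m) t := by
  simp only [E]
  rw [← Complex.exp_add]
  congr 1
  push_cast
  ring

lemma ffs_E_mul {p : ℝ → ℂ} (m : ℤ) (hp : IsFiniteFourierSeries p) :
    IsFiniteFourierSeries (fun t => E m t * p t) := by
  rw [ffs_iff] at *
  obtain ⟨F, c, rfl⟩ := hp
  refine ⟨F.image (· + m), fun b => c (b - m), ?_⟩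
  funext t
  have : tpSum (F.image (· + m)) (fun b => c (b - m)) t
      = ∑ a ∈ F, c (a + m - m) * E (a + m) t := by
    unfold tpSum
    rw [Finset.sum_image (by intro x _ y _ h; exact add_right_cancel h)]
  rw [this]
  unfold tpSum
  rw [Finset.mul_sum]
  refine Finset.sum_congr rfl (fun a _ => ?_)
  rw [add_sub_cancel_right, ← E_mul_E a m t]
  ring

lemma ffs_mul {p q : ℝ → ℂ} (hp : IsFiniteFourierSeries p) (hq : IsFiniteFourierSeries q) :
    IsFiniteFourierSeries (p * q) := by
  obtain ⟨G, d, hq'⟩ := (ffs_iff q).mp hq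
  have : p * q = fun t => ∑ m ∈ G, d m * (E m t * p t) := by
    funext t
    rw [show (p * q) t = p t * q t from rfl, hq']
    unfold tpSum
    rw [Finset.mul_sum]
    exact Finset.sum_congr rfl (fun m _ => by ring)
  rw [this]
  exact ffs_fsum _ _ (fun m _ => ffs_const_mul (d m) (ffs_E_mul m hp))

lemma ffs_pow {p : ℝ → ℂ} (hp : IsFiniteFourierSeries p) (n : ℕ) :
    IsFiniteFourierSeries (p ^ n) := by
  induction n with
  | zero => simpa [pow_zero, show ((1 : ℝ → ℂ)) = fun _ => (1:ℂ) from rfl] using ffs_const 1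
  | succ n ih => rw [pow_succ]; exact ffs_mul ih hp

lemma ffs_prod {ι : Type*} (s : Finset ι) (g : ι → ℝ → ℂ)
    (h : ∀ i ∈ s, IsFiniteFourierSeries (g i)) :
    IsFiniteFourierSeries (∏ i ∈ s, g i) :=
  Finset.prod_induction g IsFiniteFourierSeries (fun _ _ ha hb => ffs_mul ha hb)
    (by simpa [show ((1 : ℝ → ℂ)) = fun _ => (1:ℂ) from rfl] using ffs_const 1) h

lemma ffs_smooth {p : ℝ → ℂ} (hp : IsFiniteFourierSeries p) : ContDiff ℝ (⊤ : ℕ∞) p := by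
  obtain ⟨F, c, rfl⟩ := (ffs_iff p).mp hp
  exact tpSum_contDiff F c

lemma ffs_periodic {p : ℝ → ℂ} (hp : IsFiniteFourierSeries p) :
    Function.Periodic p (2 * Real.pi) := by
  obtain ⟨F, c, rfl⟩ := (ffs_iff p).mp hp
  exact tpSum_periodic F c

lemma itD_add (n : ℕ) {f g : ℝ → ℂ} (hf : ContDiff ℝ (⊤ : ℕ∞) f) (hg : ContDiff ℝ (⊤ : ℕ∞) g) :
    iteratedDeriv n (f + g) = fun x => iteratedDeriv n f x + iteratedDeriv n g x := by
  funext x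
  simp only [← iteratedDerivWithin_univ]
  exact iteratedDerivWithin_add (Set.mem_univ x) uniqueDiffOn_univ
    ((hf.of_le le_coe_top).contDiffWithinAt) ((hg.of_le le_coe_top).contDiffWithinAt)

lemma itD_const_mul (n : ℕ) (a : ℂ) {f : ℝ → ℂ} (hf : ContDiff ℝ (⊤ : ℕ∞) f) :
    iteratedDeriv n (fun t => a * f t) = fun x => a * iteratedDeriv n f x := by
  funext x
  simp only [← iteratedDerivWithin_univ]
  have : (fun t => a * f t) = a • f := by funext t; simp
  rw [this]
  exact iteratedDerivWithin_const_smul (Set.mem_univ x) uniqueDiffOn_univ a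
    ((hf.of_le le_coe_top).contDiffWithinAt)

lemma itD_fsum {ι : Type*} (s : Finset ι) (g : ι → ℝ → ℂ)
    (h : ∀ i ∈ s, ContDiff ℝ (⊤ : ℕ∞) (g i)) (n : ℕ) :
    iteratedDeriv n (fun t => ∑ i ∈ s, g i t) = fun x => ∑ i ∈ s, iteratedDeriv n (g i) x := by
  classical
  induction s using Finset.induction_on with
  | empty =>
      have hz : iteratedDeriv n (fun _ : ℝ => (0:ℂ)) = fun _ => 0 := by
        induction n with
        | zero => rfl
        | succ n ihn => rw [iteratedDeriv_succ, ihn]; funext x; simp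
      simp only [Finset.sum_empty]
      rw [hz]
  | insert a s hnot ih =>
      have hsum : ContDiff ℝ (⊤ : ℕ∞) (fun t => ∑ i ∈ s, g i t) :=
        ContDiff.sum (fun i hi => h i (Finset.mem_insert_of_mem hi))
      have h1 : (fun t => ∑ i ∈ insert a s, g i t)
          = (g a + fun t => ∑ i ∈ s, g i t) := by
        funext t; simp [Finset.sum_insert hnot]
      rw [h1, itD_add n (h a (Finset.mem_insert_self a s)) hsum,
        ih (fun i hi => h i (Finset.mem_insert_of_mem hi))]
      funext x
      simp [Finset.sum_insert hnot]

lemma periodic_iteratedDeriv {f : ℝ → ℂ} {c : ℝ} (n : ℕ) (h : Function.Periodic f c) :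
    Function.Periodic (iteratedDeriv n f) c := by
  intro x
  have h1 : (fun y : ℝ => f (y + c)) = f := funext h
  have h2 := congrFun (iteratedDeriv_comp_add_const n f c) x
  rw [h1] at h2
  exact h2.symm

lemma tpSum_iteratedDeriv_bound (N : ℕ) (c : ℤ → ℂ) (k i : ℕ) (hi : i ≤ k) (x : ℝ) :
    Complex.abs (iteratedDeriv i (tpSum (Finset.Icc (-(N:ℤ)) N) c) x)
      ≤ ((N:ℝ)+1)^k * ∑ m ∈ Finset.Icc (-(N:ℤ)) N, Complex.abs (c m) := by
  rw [tpSum_iteratedDeriv]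
  refine le_trans (tpSum_norm_le _ _ x) ?_
  rw [Finset.mul_sum]
  refine Finset.sum_le_sum (fun m hm => ?_)
  rw [map_mul, map_pow, map_mul, Complex.abs_I, mul_one, Complex.abs_intCast]
  simp only [Finset.mem_Icc] at hm
  have hm' : |m| ≤ (N:ℤ) := abs_le.mpr ⟨hm.1, hm.2⟩
  have h2 : |(m:ℝ)| ≤ (N:ℝ) := by
    rw [← Int.cast_abs]; exact_mod_cast hm'
  have h1 : (|(m:ℝ)|)^i ≤ ((N:ℝ)+1)^k := by
    calc (|(m:ℝ)|)^i ≤ ((N:ℝ)+1)^i := by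
          apply pow_le_pow_left₀ (abs_nonneg _) (by linarith)
      _ ≤ ((N:ℝ)+1)^k := by
          apply pow_le_pow_right₀ (by linarith) hi
  calc |(m:ℝ)|^i * Complex.abs (c m) ≤ ((N:ℝ)+1)^k * Complex.abs (c m) := by
        apply mul_le_mul_of_nonneg_right h1 (AbsoluteValue.nonneg _ _)
    _ = _ := rfl

lemma ffs_norm_bound {p : ℝ → ℂ} (hp : IsFiniteFourierSeries p) (k : ℕ) :
    ∃ B : ℝ, 0 ≤ B ∧ ∀ i ≤ k, ∀ x : ℝ, Complex.abs (iteratedDeriv i p x) ≤ B := by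
  obtain ⟨N, c, h⟩ := hp
  have hp' : p = tpSum (Finset.Icc (-(N:ℤ)) N) c := by
    funext t; rw [h t]; rfl
  refine ⟨((N:ℝ)+1)^k * ∑ m ∈ Finset.Icc (-(N:ℤ)) N, Complex.abs (c m), ?_, ?_⟩
  · apply mul_nonneg (by positivity)
    exact Finset.sum_nonneg (fun m _ => AbsoluteValue.nonneg _ _)
  · intro i hi x
    rw [hp']
    exact tpSum_iteratedDeriv_bound N c k i hi x

lemma hasDerivAt_pow_comp {g : ℝ → ℂ} {g' : ℂ} {x : ℝ} (hg : HasDerivAt g g' x) (n : ℕ) :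
    HasDerivAt (fun y => g y ^ (n+1)) (((n:ℂ)+1) * g x ^ n * g') x := by
  induction n with
  | zero => simpa using hg
  | succ n ih =>
      have h2 := ih.fun_mul hg
      have e : (fun y => g y ^ (n+1) * g y) = fun y => g y ^ (n+1+1) := by
        funext y; ring
      rw [e] at h2
      refine h2.congr_deriv ?_
      push_cast
      ring

lemma vanish (s : ℕ) : ∀ (g h : ℝ → ℂ), ContDiff ℝ (⊤ : ℕ∞) g → ContDiff ℝ (⊤ : ℕ∞) h → ∀ z : ℝ, g z = 0 →
    (∀ i < s, iteratedDeriv i (g ^ s * h) z = 0) ∧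
    iteratedDeriv s (g ^ s * h) z = (s.factorial : ℂ) * (deriv g z) ^ s * h z := by
  induction s with
  | zero =>
      intro g h hg hh z hz
      refine ⟨by omega, ?_⟩
      simp [iteratedDeriv_zero]
  | succ s ih =>
      intro g h hg hh z hz
      have hg' : ContDiff ℝ (⊤ : ℕ∞) (deriv g) := (contDiff_infty_iff_deriv.mp hg).2
      have hh' : ContDiff ℝ (⊤ : ℕ∞) (deriv h) := (contDiff_infty_iff_deriv.mp hh).2
      set H : ℝ → ℂ := fun x => ((s:ℂ)+1) * (deriv g x * h x) + g x * deriv h x with hH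
      have hHsm : ContDiff ℝ (⊤ : ℕ∞) H :=
        (contDiff_const.mul (hg'.mul hh)).add (hg.mul hh')
      have key : deriv (g ^ (s+1) * h) = g ^ s * H := by
        funext x
        have hgx : DifferentiableAt ℝ g x := (hg.differentiable (by simp)) x
        have hhx : DifferentiableAt ℝ h x := (hh.differentiable (by simp)) x
        have e1 : (g ^ (s+1) * h) = fun y => g y ^ (s+1) * h y := rfl
        have hp : HasDerivAt (fun y => g y ^ (s+1)) (((s:ℂ)+1) * g x ^ s * deriv g x) x :=
          hasDerivAt_pow_comp hgx.hasDerivAt s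
        rw [e1, deriv_fun_mul (hgx.fun_pow _) hhx, hp.deriv]
        show _ = g x ^ s * H x
        rw [hH]
        push_cast
        ring
      have ihH := ih g H hg hHsm z hz
      constructor
      · intro i hi
        match i with
        | 0 =>
            show (g ^ (s+1) * h) z = 0
            show g z ^ (s+1) * h z = 0
            rw [hz, zero_pow (Nat.succ_ne_zero s), zero_mul]
        | (i+1) =>
            rw [iteratedDeriv_succ', key]
            exact ihH.1 i (by omega)
      · rw [iteratedDeriv_succ', key, ihH.2, hH]
        simp only [hz, zero_mul, add_zero]
        rw [Nat.factorial_succ]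
        push_cast
        ring

lemma approx_base (f : ℝ → ℂ) (hf : Continuous f) (hper : Function.Periodic f (2 * Real.pi))
    (δ : ℝ) (hδ : 0 < δ) :
    ∃ (F : Finset ℤ) (c : ℤ → ℂ), ∀ x : ℝ, Complex.abs (f x - tpSum F c x) ≤ δ := by
  haveI : Fact (0 < 2 * Real.pi) := ⟨by positivity⟩
  let F₀ : C(AddCircle (2 * Real.pi), ℂ) := ⟨hper.lift, hf.quotient_liftOn' _⟩
  have h1 : F₀ ∈ closure ((Submodule.span ℂ (Set.range (@fourier (2*Real.pi)))) : Set _) := by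
    have h2 := span_fourier_closure_eq_top (T := 2*Real.pi)
    have h3 : F₀ ∈ (Submodule.span ℂ (Set.range (@fourier (2*Real.pi)))).topologicalClosure :=
      h2 ▸ Submodule.mem_top
    exact h3
  obtain ⟨g, hg, hdist⟩ := Metric.mem_closure_iff.mp h1 δ hδ
  obtain ⟨cf, hcf⟩ := (Finsupp.mem_span_range_iff_exists_finsupp).mp hg
  refine ⟨cf.support, cf, fun x => ?_⟩
  have h2 : tpSum cf.support (⇑cf) x = g ((x : ℝ) : AddCircle (2*Real.pi)) := by
    rw [← hcf]
    rw [Finsupp.sum]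
    rw [ContinuousMap.sum_apply]
    unfold tpSum
    refine Finset.sum_congr rfl (fun m _ => ?_)
    rw [ContinuousMap.smul_apply, fourier_coe_apply, smul_eq_mul]
    congr 1
    rw [E_apply]
    congr 1
    have hpi : (Real.pi : ℂ) ≠ 0 := by
      simpa using Real.pi_ne_zero
    field_simp
    push_cast
    ring
  rw [h2]
  have h4 : f x = F₀ ((x : ℝ) : AddCircle (2*Real.pi)) := (hper.lift_coe x).symm
  rw [h4, ← Complex.norm_eq_abs, ← Complex.dist_eq]
  exact le_of_lt (lt_of_le_of_lt (ContinuousMap.dist_apply_le_dist _) hdist)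

lemma approx (k : ℕ) : ∀ (f : ℝ → ℂ), ContDiff ℝ k f → Function.Periodic f (2 * Real.pi) →
    ∀ δ : ℝ, 0 < δ → ∃ (F : Finset ℤ) (c : ℤ → ℂ),
      ∀ i ≤ k, ∀ x : ℝ, Complex.abs (iteratedDeriv i f x - iteratedDeriv i (tpSum F c) x) ≤ δ := by
  induction k with
  | zero =>
      intro f hf hper δ hδ
      obtain ⟨F, c, h⟩ := approx_base f hf.continuous hper δ hδ
      refine ⟨F, c, fun i hi x => ?_⟩
      obtain rfl : i = 0 := Nat.le_zero.mp hi
      simpa [iteratedDeriv_zero] using h x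
  | succ k ih =>
      intro f hf hper δ hδ
      have hπ := Real.pi_pos
      set δ' := δ / (4 * Real.pi + 2) with hδ'def
      have hδ' : 0 < δ' := div_pos hδ (by linarith)
      have hf2 : ContDiff ℝ ((k : WithTop ℕ∞) + 1) f := by exact_mod_cast hf
      have hdiff : Differentiable ℝ f := (contDiff_succ_iff_deriv.mp hf2).1
      have hf' : ContDiff ℝ k (deriv f) := (contDiff_succ_iff_deriv.mp hf2).2.2
      have hper' : Function.Periodic (deriv f) (2 * Real.pi) := by
        have h1 := periodic_iteratedDeriv 1 hper
        rwa [iteratedDeriv_one] at h1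
      obtain ⟨F, c, hFc⟩ := ih (deriv f) hf' hper' δ' hδ'
      set c₀ : ℂ := if (0:ℤ) ∈ F then c 0 else 0 with hc₀def
      -- integral computations
      have hint_tp : ∫ t in (0:ℝ)..(2*Real.pi), tpSum F c t = 2 * Real.pi * c₀ := by
        unfold tpSum
        rw [intervalIntegral.integral_finset_sum (fun m _ =>
          ((contDiff_const.mul (E_contDiff m)).continuous.intervalIntegrable _ _))]
        have hterm : ∀ m ∈ F, (∫ t in (0:ℝ)..(2*Real.pi), c m * E m t)
            = if m = 0 then c 0 * (2*Real.pi) else 0 := by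
          intro m _
          rw [intervalIntegral.integral_const_mul]
          by_cases hm : m = 0
          · subst hm
            rw [if_pos rfl]
            have : ∀ t : ℝ, E 0 t = 1 := fun t => by simp [E]
            simp only [this]
            rw [intervalIntegral.integral_const]
            simp [Complex.real_smul]
          · rw [if_neg hm]
            have he : ∀ t : ℝ, E m t = Complex.exp ((m * Complex.I) * t) := by
              intro t; rw [E_apply]; ring_nf
            simp only [he]
            rw [integral_exp_mul_complex (by
              simp only [ne_eq, mul_eq_zero, Complex.I_ne_zero, or_false]
              exact_mod_cast hm)]
            have h2 : Complex.exp ((m : ℂ) * Complex.I * ((2*Real.pi : ℝ) : ℂ)) = 1 := by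
              rw [show ((m:ℂ) * Complex.I * ((2*Real.pi:ℝ):ℂ)) = m * (2 * Real.pi * Complex.I) by
                push_cast; ring]
              exact Complex.exp_int_mul_two_pi_mul_I m
            rw [h2]
            simp
        rw [Finset.sum_congr rfl hterm, Finset.sum_ite_eq' F 0 (fun _ => c 0 * (2*Real.pi))]
        rw [hc₀def]
        by_cases h0 : (0:ℤ) ∈ F
        · rw [if_pos h0, if_pos h0]; ring
        · rw [if_neg h0, if_neg h0]; ring
      have hint_f : ∫ t in (0:ℝ)..(2*Real.pi), deriv f t = 0 := by
        rw [intervalIntegral.integral_deriv_eq_sub (fun x _ => (hdiff x))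
          (hf'.continuous.intervalIntegrable _ _)]
        rw [show (2*Real.pi) = 0 + 2*Real.pi by ring, hper 0, sub_self]
      have hc₀ : Complex.abs c₀ ≤ δ' := by
        have hInt1 : IntervalIntegrable (tpSum F c) MeasureTheory.volume 0 (2*Real.pi) :=
          (tpSum_contDiff F c).continuous.intervalIntegrable _ _
        have hInt2 : IntervalIntegrable (deriv f) MeasureTheory.volume 0 (2*Real.pi) :=
          hf'.continuous.intervalIntegrable _ _
        have h3 : ∫ t in (0:ℝ)..(2*Real.pi), (tpSum F c t - deriv f t)
            = 2 * Real.pi * c₀ := by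
          rw [intervalIntegral.integral_sub hInt1 hInt2, hint_tp, hint_f, sub_zero]
        have h4 : ‖∫ t in (0:ℝ)..(2*Real.pi), (tpSum F c t - deriv f t)‖
            ≤ δ' * |2*Real.pi - 0| := by
          apply intervalIntegral.norm_integral_le_of_norm_le_const
          intro x _
          have := hFc 0 (Nat.zero_le k) x
          simp only [iteratedDeriv_zero] at this
          rw [show (tpSum F c x - deriv f x) = -(deriv f x - tpSum F c x) by ring, norm_neg]
          exact this
        rw [h3] at h4
        have h5 : Complex.abs (2 * Real.pi * c₀) = (2*Real.pi) * Complex.abs c₀ := by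
          rw [show ((2:ℂ) * (Real.pi:ℂ) * c₀) = ((2*Real.pi : ℝ) : ℂ) * c₀ by push_cast; ring]
          rw [map_mul, Complex.abs_ofReal, abs_of_pos (by linarith)]
        rw [show ‖2 * (Real.pi:ℂ) * c₀‖ = Complex.abs (2 * Real.pi * c₀) from rfl, h5] at h4
        rw [abs_of_pos (by linarith : (0:ℝ) < 2*Real.pi - 0)] at h4
        nlinarith [Complex.abs.nonneg c₀]
      -- modified coefficients
      set c'' : ℤ → ℂ := fun m => if m = 0 then 0 else c m with hc''def
      have hcc'' : ∀ i ≤ k, ∀ x : ℝ,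
          Complex.abs (iteratedDeriv i (deriv f) x - iteratedDeriv i (tpSum F c'') x)
            ≤ 2 * δ' := by
        intro i hi x
        have hd1 : Complex.abs (iteratedDeriv i (tpSum F c) x
            - iteratedDeriv i (tpSum F c'') x) ≤ Complex.abs c₀ := by
          rw [tpSum_iteratedDeriv, tpSum_iteratedDeriv]
          unfold tpSum
          rw [← Finset.sum_sub_distrib]
          have hcong : ∀ m ∈ F, ((m:ℂ) * Complex.I)^i * c m * E m x
              - ((m:ℂ) * Complex.I)^i * c'' m * E m x
              = if m = 0 then ((0:ℂ) * Complex.I)^i * c 0 * E 0 x else 0 := by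
            intro m _
            by_cases hm : m = 0
            · subst hm
              simp [hc''def]
            · rw [if_neg hm, hc''def]
              simp only [if_neg hm]
              ring
          rw [Finset.sum_congr rfl hcong,
            Finset.sum_ite_eq' F 0 (fun _ => ((0:ℂ) * Complex.I)^i * c 0 * E 0 x)]
          rw [hc₀def]
          split
          · rename_i h0
            rw [map_mul, map_mul]
            have hE0 : Complex.abs (E 0 x) = 1 := E_norm 0 x
            rw [hE0, mul_one]
            have hpow : Complex.abs (((0:ℂ) * Complex.I)^i) ≤ 1 := by
              cases i
              · simp
              · simp [zero_pow]
            calc Complex.abs (((0:ℂ)*Complex.I)^i) * Complex.abs (c 0)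
                ≤ 1 * Complex.abs (c 0) :=
                  mul_le_mul_of_nonneg_right hpow (Complex.abs.nonneg _)
              _ = Complex.abs (c 0) := one_mul _
          · simp
        calc Complex.abs (iteratedDeriv i (deriv f) x - iteratedDeriv i (tpSum F c'') x)
            ≤ Complex.abs (iteratedDeriv i (deriv f) x - iteratedDeriv i (tpSum F c) x)
              + Complex.abs (iteratedDeriv i (tpSum F c) x - iteratedDeriv i (tpSum F c'') x) := by
                have := Complex.abs.sub_le (iteratedDeriv i (deriv f) x)
                  (iteratedDeriv i (tpSum F c) x) (iteratedDeriv i (tpSum F c'') x)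
                exact this
          _ ≤ δ' + Complex.abs c₀ := add_le_add (hFc i hi x) hd1
          _ ≤ 2 * δ' := by linarith
      -- antiderivative
      set a : ℂ := f 0 - ∑ m ∈ F.erase 0, c m / (m * Complex.I) with ha
      set d : ℤ → ℂ := fun m => if m = 0 then a else c m / (m * Complex.I) with hd
      set p : ℝ → ℂ := tpSum (insert 0 F) d with hp
      have hderiv_p : deriv p = tpSum F c'' := by
        rw [hp, tpSum_deriv]
        funext t
        unfold tpSum
        have hterm : ∀ m ∈ insert (0:ℤ) F,
            ((m:ℂ) * Complex.I) * d m * E m t = (if m ∈ F then c'' m else 0) * E m t := by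
          intro m hm
          by_cases hm0 : m = 0
          · subst hm0
            simp [hd, hc''def]
          · have hmF : m ∈ F := by
              rcases Finset.mem_insert.mp hm with h | h
              · exact absurd h hm0
              · exact h
            rw [if_pos hmF, hd, hc''def]
            simp only [if_neg hm0]
            rw [mul_div_cancel₀]
            simp only [ne_eq, mul_eq_zero, Complex.I_ne_zero, or_false]
            exact_mod_cast hm0
        rw [Finset.sum_congr rfl hterm]
        by_cases h0 : (0:ℤ) ∈ F
        · rw [Finset.insert_eq_self.mpr h0]
          exact Finset.sum_congr rfl (fun m hm => by rw [if_pos hm])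
        · rw [Finset.sum_insert h0, if_neg h0, zero_mul, zero_add]
          exact Finset.sum_congr rfl (fun m hm => by rw [if_pos hm])
      have hE0' : ∀ m : ℤ, E m 0 = 1 := by
        intro m; rw [E_apply]; simp
      have hp0 : p 0 = f 0 := by
        rw [hp]
        unfold tpSum
        rw [← Finset.add_sum_erase _ _ (Finset.mem_insert_self 0 F)]
        rw [Finset.erase_insert_eq_erase]
        simp only [hE0', mul_one]
        rw [show d 0 = a from by rw [hd]; simp]
        have : ∑ m ∈ F.erase 0, d m = ∑ m ∈ F.erase 0, c m / (m * Complex.I) := by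
          refine Finset.sum_congr rfl (fun m hm => ?_)
          rw [hd]
          simp only [if_neg (Finset.ne_of_mem_erase hm)]
        rw [this, ha]
        ring
      -- conclude
      refine ⟨insert 0 F, d, fun i hi x => ?_⟩
      match i with
      | (i+1) =>
          rw [iteratedDeriv_succ', iteratedDeriv_succ', hderiv_p]
          have h6 := hcc'' i (by omega) x
          calc Complex.abs (iteratedDeriv i (deriv f) x - iteratedDeriv i (tpSum F c'') x)
              ≤ 2 * δ' := h6
            _ ≤ δ := by
                show 2 * (δ / (4*Real.pi+2)) ≤ δ
                rw [mul_div_assoc', div_le_iff₀ (by linarith : (0:ℝ) < 4*Real.pi+2)]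
                nlinarith
      | 0 =>
          simp only [iteratedDeriv_zero]
          set g : ℝ → ℂ := fun x => f x - p x with hg
          have hpdiff : Differentiable ℝ p := by
            rw [hp]
            exact (tpSum_contDiff _ _).differentiable (by simp)
          have hgdiff : Differentiable ℝ g := hdiff.sub hpdiff
          have hgd : ∀ y : ℝ, Complex.abs (deriv g y) ≤ 2 * δ' := by
            intro y
            rw [hg]
            rw [deriv_fun_sub (hdiff y) (hpdiff y)]
            have h7 := hcc'' 0 (Nat.zero_le k) y
            simp only [iteratedDeriv_zero] at h7
            rw [← hderiv_p] at h7
            exact h7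
          have hg0 : g 0 = 0 := by rw [hg]; simp [hp0]
          have hgper : Function.Periodic g (2 * Real.pi) := by
            intro y
            show f (y + 2*Real.pi) - p (y + 2*Real.pi) = f y - p y
            have hpp := tpSum_periodic (insert 0 F) d y
            rw [← hp] at hpp
            rw [hper y, hpp]
          obtain ⟨y, hy, hxy⟩ := hgper.exists_mem_Ico₀ (by linarith) x
          have h8 : ‖g y - g 0‖ ≤ (2*δ') * ‖y - 0‖ := by
            apply convex_univ.norm_image_sub_le_of_norm_deriv_le
              (fun u _ => (hgdiff u)) (fun u _ => hgd u)
              (Set.mem_univ 0) (Set.mem_univ y)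
          rw [hg0, sub_zero, sub_zero] at h8
          have h9 : ‖y‖ ≤ 2 * Real.pi := by
            rw [Real.norm_eq_abs, _root_.abs_of_nonneg hy.1]
            exact le_of_lt hy.2
          have : Complex.abs (f x - p x) = ‖g y‖ := by rw [← hxy]; rfl
          rw [this]
          calc ‖g y‖ ≤ (2*δ') * ‖y‖ := h8
            _ ≤ (2*δ') * (2*Real.pi) := by
                apply mul_le_mul_of_nonneg_left h9 (by linarith)
            _ ≤ δ := by
                show 2 * (δ / (4*Real.pi+2)) * (2*Real.pi) ≤ δ
                rw [mul_div_assoc', div_mul_eq_mul_div, div_le_iff₀ (by linarith : (0:ℝ) < 4*Real.pi+2)]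
                nlinarith

def phi (w : ℂ) : ℝ → ℂ := fun t => Complex.exp (t * Complex.I) - w

lemma phi_eq (w : ℂ) : phi w = fun t => E 1 t - w := by
  funext t
  simp [phi, E]

lemma phi_contDiff (w : ℂ) : ContDiff ℝ (⊤ : ℕ∞) (phi w) := by
  rw [phi_eq]
  exact (E_contDiff 1).sub contDiff_const

lemma phi_ffs (w : ℂ) : IsFiniteFourierSeries (phi w) := by
  rw [phi_eq]
  have h1 : (fun t => E 1 t - w) = (fun t => E 1 t) + fun _ => -w := by
    funext t; simp; ring
  rw [h1]
  refine ffs_add ?_ (ffs_const (-w))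
  rw [ffs_iff]
  refine ⟨{1}, fun _ => 1, ?_⟩
  funext t
  simp [tpSum]

lemma phi_hasDerivAt (w : ℂ) (t : ℝ) :
    HasDerivAt (phi w) (Complex.I * Complex.exp (t * Complex.I)) t := by
  rw [phi_eq]
  have h1 := (E_hasDerivAt 1 t).sub_const w
  have h2 : ((1:ℤ) : ℂ) * Complex.I * E 1 t = Complex.I * Complex.exp (t * Complex.I) := by
    rw [E_apply]
    push_cast
    ring_nf
  rwa [h2] at h1

lemma phi_deriv (w : ℂ) (t : ℝ) :
    deriv (phi w) t = Complex.I * Complex.exp (t * Complex.I) := (phi_hasDerivAt w t).deriv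

lemma contDiff_pi_pow {f : ℝ → ℂ} (h : ContDiff ℝ (⊤:ℕ∞) f) (n : ℕ) :
    ContDiff ℝ (⊤:ℕ∞) (f ^ n) := by
  have e : (f ^ n) = fun t => f t ^ n := rfl
  rw [e]; exact h.pow n

lemma contDiff_pi_mul {f g : ℝ → ℂ} (hf : ContDiff ℝ (⊤:ℕ∞) f) (hg : ContDiff ℝ (⊤:ℕ∞) g) :
    ContDiff ℝ (⊤:ℕ∞) (f * g) := by
  have e : (f * g) = fun t => f t * g t := rfl
  rw [e]; exact hf.mul hg

lemma contDiff_pi_prod {ι : Type*} (s : Finset ι) (g : ι → ℝ → ℂ)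
    (h : ∀ i ∈ s, ContDiff ℝ (⊤:ℕ∞) (g i)) :
    ContDiff ℝ (⊤:ℕ∞) (∏ i ∈ s, g i) :=
  Finset.prod_induction g _ (fun _ _ ha hb => contDiff_pi_mul ha hb)
    (by have : ((1 : ℝ → ℂ)) = fun _ => (1:ℂ) := rfl
        rw [this]; exact contDiff_const) h

lemma jet_basis (k : ℕ) (s : Finset ℂ) (ζ : ℂ → ℝ)
    (hζ : ∀ w ∈ s, Complex.exp ((ζ w : ℂ) * Complex.I) = w)
    (hs0 : ∀ w ∈ s, w ≠ 0)
    (w₀ : ℂ) (hw₀ : w₀ ∈ s) (i₀ : ℕ) (hi₀ : i₀ ≤ k) :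
    ∃ q : ℝ → ℂ, IsFiniteFourierSeries q ∧
      (∀ i ≤ k, ∀ w ∈ s, iteratedDeriv i q (ζ w) = if w = w₀ ∧ i = i₀ then 1 else 0) := by
  classical
  set β : ℝ → ℂ := ∏ w ∈ s.erase w₀, (phi w) ^ (k+1) with hβ
  have hβsm : ContDiff ℝ (⊤:ℕ∞) β :=
    contDiff_pi_prod _ _ (fun w _ => contDiff_pi_pow (phi_contDiff w) _)
  set g : ℕ → ℝ → ℂ := fun j => (phi w₀) ^ j * β with hgdef
  have hgsm : ∀ j, ContDiff ℝ (⊤:ℕ∞) (g j) :=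
    fun j => contDiff_pi_mul (contDiff_pi_pow (phi_contDiff w₀) j) hβsm
  have hgffs : ∀ j, IsFiniteFourierSeries (g j) :=
    fun j => ffs_mul (ffs_pow (phi_ffs w₀) j)
      (ffs_prod _ _ (fun w _ => ffs_pow (phi_ffs w) (k+1)))
  have hφzero : ∀ w ∈ s, phi w (ζ w) = 0 := by
    intro w hw
    simp [phi, hζ w hw]
  have hφderiv : ∀ w ∈ s, deriv (phi w) (ζ w) = Complex.I * w := by
    intro w hw
    rw [phi_deriv, hζ w hw]
  -- jets at other nodes vanish
  have hother : ∀ j, ∀ i ≤ k, ∀ w' ∈ s, w' ≠ w₀ → iteratedDeriv i (g j) (ζ w') = 0 := by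
    intro j i hi w' hw' hne
    have hmem : w' ∈ s.erase w₀ := Finset.mem_erase.mpr ⟨hne, hw'⟩
    have hfact : β = (phi w') ^ (k+1) * ∏ w ∈ (s.erase w₀).erase w', (phi w) ^ (k+1) :=
      (Finset.mul_prod_erase _ _ hmem).symm
    have hsplit : g j = (phi w') ^ (k+1) *
        ((∏ w ∈ (s.erase w₀).erase w', (phi w) ^ (k+1)) * (phi w₀) ^ j) := by
      rw [hgdef]
      simp only
      rw [hfact]
      ring
    rw [hsplit]
    refine (vanish (k+1) (phi w') _ (phi_contDiff w') ?_ (ζ w') (hφzero w' hw')).1 i (by omega)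
    exact contDiff_pi_mul
      (contDiff_pi_prod _ _ (fun w _ => contDiff_pi_pow (phi_contDiff w) _))
      (contDiff_pi_pow (phi_contDiff w₀) j)
  -- triangular structure at w₀
  have hβval : β (ζ w₀) = ∏ w ∈ s.erase w₀, (w₀ - w) ^ (k+1) := by
    rw [hβ, Finset.prod_apply]
    refine Finset.prod_congr rfl (fun w hw => ?_)
    have : phi w (ζ w₀) = w₀ - w := by
      simp [phi, hζ w₀ hw₀]
    rw [Pi.pow_apply, this]
  have hβne : β (ζ w₀) ≠ 0 := by
    rw [hβval]
    refine Finset.prod_ne_zero_iff.mpr (fun w hw => ?_)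
    have : w ≠ w₀ := (Finset.mem_erase.mp hw).1
    exact pow_ne_zero _ (sub_ne_zero.mpr (Ne.symm this))
  have htri : ∀ j i : ℕ, i < j → iteratedDeriv i (g j) (ζ w₀) = 0 := by
    intro j i hij
    exact (vanish j (phi w₀) β (phi_contDiff w₀) hβsm (ζ w₀) (hφzero w₀ hw₀)).1 i hij
  have hdiag : ∀ j : ℕ, iteratedDeriv j (g j) (ζ w₀)
      = (j.factorial : ℂ) * (Complex.I * w₀) ^ j * β (ζ w₀) := by
    intro j
    have := (vanish j (phi w₀) β (phi_contDiff w₀) hβsm (ζ w₀) (hφzero w₀ hw₀)).2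
    rwa [hφderiv w₀ hw₀] at this
  set A : Matrix (Fin (k+1)) (Fin (k+1)) ℂ :=
    fun j i => iteratedDeriv i (g j) (ζ w₀) with hA
  have hAtri : A.BlockTriangular id := by
    intro i j hij
    exact htri i j hij
  have hdet : A.det ≠ 0 := by
    rw [Matrix.det_of_upperTriangular hAtri]
    refine Finset.prod_ne_zero_iff.mpr (fun j _ => ?_)
    rw [hA]
    simp only
    rw [hdiag j]
    refine mul_ne_zero (mul_ne_zero ?_ ?_) hβne
    · exact_mod_cast (Nat.factorial_ne_zero j)
    · exact pow_ne_zero _ (mul_ne_zero Complex.I_ne_zero (hs0 w₀ hw₀))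
  set i₀' : Fin (k+1) := ⟨i₀, by omega⟩ with hi₀'
  set α : Fin (k+1) → ℂ := Matrix.vecMul (Pi.single i₀' 1) A⁻¹ with hα
  have hαA : Matrix.vecMul α A = Pi.single i₀' 1 := by
    rw [hα, Matrix.vecMul_vecMul, Matrix.nonsing_inv_mul A (Ne.isUnit hdet), Matrix.vecMul_one]
  refine ⟨fun t => ∑ j : Fin (k+1), α j * g j t, ?_, ?_⟩
  · exact ffs_fsum _ _ (fun j _ => ffs_const_mul (α j) (hgffs j))
  · intro i hi w hw
    rw [itD_fsum Finset.univ (fun j => fun t => α j * g j t)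
      (fun j _ => contDiff_const.mul (hgsm j)) i]
    have hterm : ∀ j : Fin (k+1),
        iteratedDeriv i (fun t => α j * g j t) (ζ w) = α j * iteratedDeriv i (g j) (ζ w) := by
      intro j
      rw [itD_const_mul i (α j) (hgsm j)]
    simp only [hterm]
    by_cases hww : w = w₀
    · subst hww
      have : ∑ j : Fin (k+1), α j * iteratedDeriv i (g j) (ζ w)
          = Matrix.vecMul α A ⟨i, by omega⟩ := by
        rw [Matrix.vecMul]
        simp only [dotProduct, hA]
      rw [this, hαA]
      by_cases hii : i = i₀
      · subst hii
        rw [if_pos ⟨rfl, rfl⟩]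
        simp [hi₀']
      · rw [if_neg (by tauto)]
        rw [Pi.single_apply]
        rw [if_neg (by simp [hi₀', Fin.ext_iff]; omega)]
    · rw [if_neg (by tauto)]
      refine Finset.sum_eq_zero (fun j _ => ?_)
      rw [hother j i hi w hw hww, mul_zero]

lemma eval_congr_of_exp_eq {g : ℝ → ℂ} (hper : Function.Periodic g (2 * Real.pi)) {a b : ℝ}
    (h : Complex.exp ((a:ℂ) * Complex.I) = Complex.exp ((b:ℂ) * Complex.I)) : g a = g b := by
  rw [Complex.exp_eq_exp_iff_exists_int] at h
  obtain ⟨n, hn⟩ := h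
  have h2 : (a : ℂ) = (b : ℂ) + n * (2 * Real.pi) := by
    have h3 : ((a : ℂ) - ((b:ℂ) + n * (2*Real.pi))) * Complex.I = 0 := by
      rw [sub_mul, hn]
      push_cast
      ring
    have h4 := mul_eq_zero.mp h3
    rcases h4 with h4 | h4
    · linear_combination h4
    · exact absurd h4 Complex.I_ne_zero
  have h5 : a = b + n * (2 * Real.pi) := by exact_mod_cast h2
  have h6 := hper.sub_int_mul_eq (x := a) (n := n)
  rw [h5] at h6 ⊢
  rw [show b + n * (2*Real.pi) - n * (2*Real.pi) = b by ring] at h6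
  exact h6.symm

theorem fourier_interpolation_and_approximation
    (k : ℕ) (f : ℝ → ℂ) (hf : ContDiff ℝ k f)
    (hper : ∀ x : ℝ, f (x + 2 * Real.pi) = f x)
    (M : ℕ) (z : Fin M → ℝ) (ε : ℝ) (hε : 0 < ε) :
    ∃ p : ℝ → ℂ, IsFiniteFourierSeries p ∧
      (∀ i ≤ k, ∀ j : Fin M, iteratedDeriv i p (z j) = iteratedDeriv i f (z j)) ∧
      (∀ i ≤ k, ∀ x : ℝ, ‖iteratedDeriv i f x - iteratedDeriv i p x‖ < ε) := by
  classical
  have hπ := Real.pi_pos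
  have hperiodic : Function.Periodic f (2 * Real.pi) := hper
  set W : Finset ℂ := Finset.image (fun j => Complex.exp ((z j : ℂ) * Complex.I)) Finset.univ
    with hW
  set ζ : ℂ → ℝ := fun w =>
    if h : ∃ j : Fin M, Complex.exp ((z j : ℂ) * Complex.I) = w then z h.choose else 0 with hζdef
  have hζ : ∀ w ∈ W, Complex.exp ((ζ w : ℂ) * Complex.I) = w := by
    intro w hw
    rw [hW, Finset.mem_image] at hw
    obtain ⟨j, _, hj⟩ := hw
    have hex : ∃ j : Fin M, Complex.exp ((z j : ℂ) * Complex.I) = w := ⟨j, hj⟩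
    rw [hζdef]
    simp only [dif_pos hex]
    exact hex.choose_spec
  have hs0 : ∀ w ∈ W, w ≠ 0 := by
    intro w hw
    rw [← hζ w hw]
    exact Complex.exp_ne_zero _
  have hbasis : ∀ w : ℂ, w ∈ W → ∀ i₀ : ℕ, i₀ ≤ k → ∃ q : ℝ → ℂ,
      IsFiniteFourierSeries q ∧
      (∀ i ≤ k, ∀ w' ∈ W, iteratedDeriv i q (ζ w') = if w' = w ∧ i = i₀ then 1 else 0) :=
    fun w hw i₀ hi₀ => jet_basis k W ζ hζ hs0 w hw i₀ hi₀
  choose! q hq1 hq2 using hbasis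
  have hqbd : ∀ w : ℂ, w ∈ W → ∀ i₀ : ℕ, i₀ ≤ k → ∃ B : ℝ, 0 ≤ B ∧
      ∀ i ≤ k, ∀ x : ℝ, Complex.abs (iteratedDeriv i (q w i₀) x) ≤ B :=
    fun w hw i₀ hi₀ => ffs_norm_bound (hq1 w hw i₀ hi₀) k
  choose! B hB0 hBbd using hqbd
  set Btot : ℝ := ∑ w ∈ W, ∑ i₀ ∈ Finset.range (k+1), B w i₀ with hBtot
  have hBtot0 : 0 ≤ Btot := by
    refine Finset.sum_nonneg (fun w hw => Finset.sum_nonneg (fun i₀ hi₀ => ?_))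
    exact hB0 w hw i₀ (by simp only [Finset.mem_range] at hi₀; omega)
  set δ : ℝ := ε / (2 * (1 + Btot)) with hδdef
  have hδpos : 0 < δ := by
    apply div_pos hε
    nlinarith
  obtain ⟨F, c, hFc⟩ := approx k f hf hperiodic δ hδpos
  set P : ℝ → ℂ := tpSum F c with hP
  have hPsm : ContDiff ℝ (⊤:ℕ∞) P := tpSum_contDiff F c
  set v : ℂ → ℕ → ℂ := fun w i => iteratedDeriv i f (ζ w) - iteratedDeriv i P (ζ w) with hv
  have hvbd : ∀ w ∈ W, ∀ i ≤ k, Complex.abs (v w i) ≤ δ := by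
    intro w _ i hi
    exact hFc i hi (ζ w)
  set r : ℝ → ℂ := fun t => ∑ w ∈ W, ∑ i ∈ Finset.range (k+1), v w i * q w i t with hr
  have hqsm : ∀ w ∈ W, ∀ i ∈ Finset.range (k+1), ContDiff ℝ (⊤:ℕ∞) (q w i) := by
    intro w hw i hi
    exact ffs_smooth (hq1 w hw i (by simp only [Finset.mem_range] at hi; omega))
  have hrow_sm : ∀ w ∈ W, ContDiff ℝ (⊤:ℕ∞) (fun t => ∑ i ∈ Finset.range (k+1), v w i * q w i t) := by
    intro w hw
    exact ContDiff.sum (fun i hi => contDiff_const.mul (hqsm w hw i hi))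
  have hrsm : ContDiff ℝ (⊤:ℕ∞) r := by
    rw [hr]
    exact ContDiff.sum (fun w hw => hrow_sm w hw)
  have hitr : ∀ i : ℕ, ∀ x : ℝ, iteratedDeriv i r x
      = ∑ w ∈ W, ∑ i' ∈ Finset.range (k+1), v w i' * iteratedDeriv i (q w i') x := by
    intro i x
    rw [hr]
    rw [itD_fsum W _ (fun w hw => hrow_sm w hw) i]
    refine Finset.sum_congr rfl (fun w hw => ?_)
    rw [itD_fsum (Finset.range (k+1)) _ (fun i' hi' => contDiff_const.mul (hqsm w hw i' hi')) i]
    refine Finset.sum_congr rfl (fun i' hi' => ?_)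
    rw [itD_const_mul i (v w i') (hqsm w hw i' hi')]
  set p : ℝ → ℂ := fun t => P t + r t with hp
  have hpffs : IsFiniteFourierSeries p := by
    rw [hp]
    have h1 : (fun t => P t + r t) = P + r := rfl
    rw [h1]
    refine ffs_add (ffs_tpSum F c) ?_
    rw [hr]
    refine ffs_fsum _ _ (fun w hw => ?_)
    refine ffs_fsum _ _ (fun i hi => ?_)
    exact ffs_const_mul _ (hq1 w hw i (by simp only [Finset.mem_range] at hi; omega))
  have hitp : ∀ i : ℕ, ∀ x : ℝ, iteratedDeriv i p x = iteratedDeriv i P x + iteratedDeriv i r x := by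
    intro i x
    rw [hp]
    have h1 : (fun t => P t + r t) = P + r := rfl
    rw [h1, itD_add i hPsm hrsm]
  -- interpolation at the representatives
  have hinterp_rep : ∀ i ≤ k, ∀ w ∈ W, iteratedDeriv i p (ζ w) = iteratedDeriv i f (ζ w) := by
    intro i hi w hw
    rw [hitp i (ζ w), hitr i (ζ w)]
    have hsum : ∑ w' ∈ W, ∑ i' ∈ Finset.range (k+1), v w' i' * iteratedDeriv i (q w' i') (ζ w)
        = v w i := by
      have hterm : ∀ w' ∈ W, ∑ i' ∈ Finset.range (k+1), v w' i' * iteratedDeriv i (q w' i') (ζ w)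
          = if w' = w then v w i else 0 := by
        intro w' hw'
        have hjet : ∀ i' ∈ Finset.range (k+1),
            v w' i' * iteratedDeriv i (q w' i') (ζ w)
            = if w = w' ∧ i = i' then v w' i' else 0 := by
          intro i' hi'
          rw [hq2 w' hw' i' (by simp only [Finset.mem_range] at hi'; omega) i hi w hw]
          by_cases hcond : w = w' ∧ i = i'
          · rw [if_pos hcond, if_pos hcond, mul_one]
          · rw [if_neg hcond, if_neg hcond, mul_zero]
        rw [Finset.sum_congr rfl hjet]
        by_cases hww : w = w'
        · subst hww
          rw [if_pos rfl]
          have : ∀ i' ∈ Finset.range (k+1), (if w = w ∧ i = i' then v w i' else 0)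
              = if i' = i then v w i' else 0 := by
            intro i' _
            by_cases h : i = i'
            · subst h; simp
            · rw [if_neg (by tauto), if_neg (by omega)]
          rw [Finset.sum_congr rfl this, Finset.sum_ite_eq' (Finset.range (k+1)) i]
          rw [if_pos (Finset.mem_range.mpr (by omega))]
        · rw [if_neg (fun h => hww h.symm)]
          refine Finset.sum_eq_zero (fun i' _ => ?_)
          rw [if_neg (by tauto)]
      rw [Finset.sum_congr rfl hterm, Finset.sum_ite_eq' W w]
      rw [if_pos hw]
    rw [hsum, hv]
    simp only
    ring
  -- conclude
  refine ⟨p, hpffs, ?_, ?_⟩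
  · intro i hi j
    set w : ℂ := Complex.exp ((z j : ℂ) * Complex.I) with hwdef
    have hwW : w ∈ W := by
      rw [hW, Finset.mem_image]
      exact ⟨j, Finset.mem_univ j, rfl⟩
    have hexp : Complex.exp (((z j : ℝ) : ℂ) * Complex.I)
        = Complex.exp ((ζ w : ℂ) * Complex.I) := by rw [hζ w hwW]
    have hpper : Function.Periodic (iteratedDeriv i p) (2 * Real.pi) :=
      periodic_iteratedDeriv i (ffs_periodic hpffs)
    have hfper : Function.Periodic (iteratedDeriv i f) (2 * Real.pi) :=
      periodic_iteratedDeriv i hperiodic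
    rw [eval_congr_of_exp_eq hpper hexp, eval_congr_of_exp_eq hfper hexp]
    exact hinterp_rep i hi w hwW
  · intro i hi x
    have h1 : Complex.abs (iteratedDeriv i r x) ≤ δ * Btot := by
      rw [hitr i x]
      calc Complex.abs (∑ w ∈ W, ∑ i' ∈ Finset.range (k+1), v w i' * iteratedDeriv i (q w i') x)
          ≤ ∑ w ∈ W, Complex.abs (∑ i' ∈ Finset.range (k+1), v w i' * iteratedDeriv i (q w i') x) := by
            have := norm_sum_le W (fun w => ∑ i' ∈ Finset.range (k+1), v w i' * iteratedDeriv i (q w i') x)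
            simpa [← Complex.norm_eq_abs] using this
        _ ≤ ∑ w ∈ W, ∑ i' ∈ Finset.range (k+1), Complex.abs (v w i' * iteratedDeriv i (q w i') x) := by
            refine Finset.sum_le_sum (fun w _ => ?_)
            have := norm_sum_le (Finset.range (k+1)) (fun i' => v w i' * iteratedDeriv i (q w i') x)
            simpa [← Complex.norm_eq_abs] using this
        _ ≤ ∑ w ∈ W, ∑ i' ∈ Finset.range (k+1), δ * B w i' := by
            refine Finset.sum_le_sum (fun w hw => Finset.sum_le_sum (fun i' hi' => ?_))
            have hi'k : i' ≤ k := by simp only [Finset.mem_range] at hi'; omega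
            rw [map_mul]
            have hb1 := hvbd w hw i' hi'k
            have hb2 := hBbd w hw i' hi'k i hi x
            have := mul_le_mul hb1 hb2 (Complex.abs.nonneg _) (le_of_lt hδpos)
            exact this
        _ = δ * Btot := by
            rw [hBtot, Finset.mul_sum]
            refine Finset.sum_congr rfl (fun w _ => ?_)
            rw [Finset.mul_sum]
    have h2 : Complex.abs (iteratedDeriv i f x - iteratedDeriv i p x)
        ≤ δ + δ * Btot := by
      rw [hitp i x]
      calc Complex.abs (iteratedDeriv i f x - (iteratedDeriv i P x + iteratedDeriv i r x))
          = Complex.abs ((iteratedDeriv i f x - iteratedDeriv i P x) + (- iteratedDeriv i r x)) := by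
            congr 1; ring
        _ ≤ Complex.abs (iteratedDeriv i f x - iteratedDeriv i P x)
            + Complex.abs (- iteratedDeriv i r x) := Complex.abs.add_le _ _
        _ ≤ δ + δ * Btot := by
            rw [(Complex.abs).map_neg]
            exact add_le_add (hFc i hi x) h1
    calc Complex.abs (iteratedDeriv i f x - iteratedDeriv i p x) ≤ δ + δ * Btot := h2
      _ = δ * (1 + Btot) := by ring
      _ < ε := by
          rw [hδdef, div_mul_eq_mul_div, div_lt_iff₀ (by nlinarith : (0:ℝ) < 2 * (1+Btot))]
          nlinarith
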